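/- Let u ∈ D[ω] with least δ-exponent k ≥ 2, i.e., u = δ^{−k}(aω³ + bω² + cω + d) with a, b, c, d ∈ ℤ, k minimal, where δ = 1 + ω. Suppose |u| ≤ 1 and |u•| ≤ 1. Let ξ = 1 − u†u ∈ D[√2] and write ξ•ξ = n/2^ℓ with n ∈ ℤ and ℓ ≥ 0 minimal. Then n ≡ 1 (mod 8). -/

import Mathlib

noncomputable def ω : ℂ := (1 + Complex.I) / (Real.sqrt 2 : ℂ)

/-- δ = 1 + ω. -/
noncomputable def δ : ℂ := 1 + ω

noncomputable def zω (a b c d : ℤ) : ℂ := a * ω ^ 3 + b * ω ^ 2 + c * ω + d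

/-- The √2-conjugate (−)• of aω³ + bω² + cω + d; note δ• = 1 − ω. -/
noncomputable def zωBul (a b c d : ℤ) : ℂ := (-a) * ω ^ 3 + b * ω ^ 2 + (-c) * ω + d


lemma s2c : ((Real.sqrt 2 : ℝ) : ℂ)^2 = 2 := by
  norm_cast
  rw [Real.sq_sqrt]; norm_num

lemma scne : ((Real.sqrt 2 : ℝ) : ℂ) ≠ 0 := by
  simp [Real.sqrt_eq_zero']

lemma hω2 : ω^2 = Complex.I := by
  simp only [ω]
  rw [div_pow, s2c]
  ring_nf
  rw [Complex.I_sq]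
  ring

lemma hω4 : ω^4 = -1 := by
  rw [show (4:ℕ) = 2*2 from rfl, pow_mul, hω2, Complex.I_sq]

lemma hsc : ((Real.sqrt 2 : ℝ) : ℂ) = ω - ω^3 := by
  have h : (ω - ω^3) * ((Real.sqrt 2 : ℝ) : ℂ) = ((Real.sqrt 2 : ℝ) : ℂ) * ((Real.sqrt 2 : ℝ) : ℂ) := by
    have hωc : ω * ((Real.sqrt 2 : ℝ) : ℂ) = 1 + Complex.I := by
      simp only [ω]; field_simp
    calc (ω - ω^3) * ((Real.sqrt 2 : ℝ) : ℂ) = ω * ((Real.sqrt 2 : ℝ) : ℂ) * (1 - ω^2) := by ring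
    _ = (1 + Complex.I) * (1 - Complex.I) := by rw [hωc, hω2]
    _ = 2 := by ring_nf; rw [Complex.I_sq]; ring
    _ = _ := by rw [← s2c]; ring
  exact (mul_right_cancel₀ scne h).symm

lemma hconjω : (starRingEnd ℂ) ω = -ω^3 := by
  have h : (starRingEnd ℂ) ω * ((Real.sqrt 2 : ℝ) : ℂ) = (-ω^3) * ((Real.sqrt 2 : ℝ) : ℂ) := by
    have h1 : (starRingEnd ℂ) ω * ((Real.sqrt 2 : ℝ) : ℂ) = 1 - Complex.I := by
      simp only [ω]
      rw [map_div₀, Complex.conj_ofReal]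
      field_simp
      ring_nf; rw [map_add, map_one, Complex.conj_I]; ring
    have h2 : (-ω^3) * ((Real.sqrt 2 : ℝ) : ℂ) = 1 - Complex.I := by
      have hωc : ω * ((Real.sqrt 2 : ℝ) : ℂ) = 1 + Complex.I := by
        simp only [ω]; field_simp
      calc (-ω^3) * ((Real.sqrt 2 : ℝ) : ℂ) = -(ω^2) * (ω * ((Real.sqrt 2 : ℝ) : ℂ)) := by ring
      _ = -Complex.I * (1 + Complex.I) := by rw [hω2, hωc]
      _ = 1 - Complex.I := by ring_nf; rw [Complex.I_sq]; ring
    rw [h1, h2]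
  exact mul_right_cancel₀ scne h

lemma normSq_zω (a b c d : ℤ) : ‖zω a b c d‖^2 =
    ((a^2+b^2+c^2+d^2 : ℤ) : ℝ) + ((a*b+b*c+c*d-a*d : ℤ) : ℝ) * Real.sqrt 2 := by
  have hconjz : (starRingEnd ℂ) (zω a b c d) = -(a:ℂ)*ω - b*ω^2 - c*ω^3 + d := by
    simp only [zω, map_add, map_mul, map_pow, map_intCast, hconjω]
    linear_combination (-(a:ℂ)*ω*(ω^4 - 1) + (b:ℂ)*ω^2) * hω4
  have hzz : zω a b c d * (starRingEnd ℂ) (zω a b c d) =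
      (((a^2+b^2+c^2+d^2 : ℤ) : ℝ) : ℂ) + (((a*b+b*c+c*d-a*d : ℤ) : ℝ) : ℂ) * ((Real.sqrt 2 : ℝ) : ℂ) := by
    rw [hconjz, hsc]
    simp only [zω]
    push_cast
    linear_combination (-((a:ℂ)^2+(b:ℂ)^2+(c:ℂ)^2) - ((a:ℂ)*b+(b:ℂ)*c)*ω - (a:ℂ)*c*ω^2) * hω4
  have h2 := Complex.mul_conj (zω a b c d)
  rw [hzz] at h2
  have h3 : (Complex.normSq (zω a b c d) : ℝ) =
      ((a^2+b^2+c^2+d^2 : ℤ) : ℝ) + ((a*b+b*c+c*d-a*d : ℤ) : ℝ) * Real.sqrt 2 := by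
    have := h2.symm
    exact_mod_cast this
  rw [← h3, Complex.sq_norm]

def AB : ℕ → ℤ × ℤ
  | 0 => (1, 0)
  | n+1 => (2*(AB n).1 + 2*(AB n).2, (AB n).1 + 2*(AB n).2)

lemma AB_pow (k : ℕ) :
    (2+Real.sqrt 2)^k = ((AB k).1 : ℝ) + ((AB k).2 : ℝ) * Real.sqrt 2 ∧
    (2-Real.sqrt 2)^k = ((AB k).1 : ℝ) - ((AB k).2 : ℝ) * Real.sqrt 2 := by
  have hs : Real.sqrt 2 ^ 2 = 2 := Real.sq_sqrt (by norm_num)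
  induction k with
  | zero => simp [AB]
  | succ m ih =>
    obtain ⟨h1, h2⟩ := ih
    constructor
    · rw [pow_succ, h1]
      simp only [AB]
      push_cast
      linear_combination ((AB m).2 : ℝ) * hs
    · rw [pow_succ, h2]
      simp only [AB]
      push_cast
      linear_combination ((AB m).2 : ℝ) * hs

lemma AB1_even (k : ℕ) : 2 ∣ (AB (k+1)).1 :=
  ⟨(AB k).1 + (AB k).2, by simp [AB]; ring⟩

lemma AB2_even (k : ℕ) : 2 ∣ (AB (k+2)).2 := by
  obtain ⟨m, hm⟩ := AB1_even k
  exact ⟨m + (AB (k+1)).2, by simp [AB] at hm ⊢; omega⟩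

/-- If u ∈ D[ω] has least δ-exponent k ≥ 2, and both u and u• lie in the closed unit disk,
    and ξ•ξ = n/2^ℓ where ξ = 1 − u†u, with n ∈ ℤ and ℓ minimal, then n ≡ 1 (mod 8). -/
theorem n_equiv_one_mod_eight (u : ℂ) (a b c d : ℤ) (k : ℕ) (hk : 2 ≤ k)
    (hrep : u = zω a b c d / δ ^ k)
    (hmin : ∀ k' : ℕ, k' < k → ¬ ∃ a' b' c' d' : ℤ, u = zω a' b' c' d' / δ ^ k')
    (hu : ‖u‖ ≤ 1) (hubul : ‖zωBul a b c d / (1 - ω) ^ k‖ ≤ 1)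
    (n : ℤ) (ℓ : ℕ)
    (hn : (1 - ‖u‖ ^ 2) * (1 - ‖zωBul a b c d / (1 - ω) ^ k‖ ^ 2) = (n : ℝ) / 2 ^ ℓ)
    (hℓmin : ∀ ℓ' : ℕ, ℓ' < ℓ → ¬ ∃ n' : ℤ,
      (1 - ‖u‖ ^ 2) * (1 - ‖zωBul a b c d / (1 - ω) ^ k‖ ^ 2) = (n' : ℝ) / 2 ^ ℓ') :
    n % 8 = 1 := by
  have hs : Real.sqrt 2 ^ 2 = 2 := Real.sq_sqrt (by norm_num)
  have hs_nonneg : (0:ℝ) ≤ Real.sqrt 2 := Real.sqrt_nonneg 2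
  have hs_lt : Real.sqrt 2 < 2 := by nlinarith
  -- norms of δ and 1 - ω
  have hδz : δ = zω 0 0 1 1 := by simp only [δ, zω]; push_cast; ring
  have hδ1z : (1 : ℂ) - ω = zω 0 0 (-1) 1 := by simp only [zω]; push_cast; ring
  have hBulz : zωBul a b c d = zω (-a) b (-c) d := by simp only [zω, zωBul]; push_cast; ring
  have hnδ : ‖δ‖^2 = 2 + Real.sqrt 2 := by rw [hδz, normSq_zω]; push_cast; ring
  have hnδ' : ‖(1:ℂ)-ω‖^2 = 2 - Real.sqrt 2 := by rw [hδ1z, normSq_zω]; push_cast; ring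
  have hδne : δ ≠ 0 := by
    intro h
    rw [h] at hnδ
    simp at hnδ
    linarith
  -- minimality ⇒ a+b+c+d odd
  have hoddsum : ¬ ((2:ℤ) ∣ (a+b+c+d)) := by
    intro h2
    obtain ⟨t, ht⟩ : ∃ t, a - b + c - d = 2*t := by
      obtain ⟨m, hm⟩ := h2; exact ⟨a + c - m, by omega⟩
    refine hmin (k-1) (by omega) ⟨t, b - c + d + t, c - d - t, d + t, ?_⟩
    have htC : (a : ℂ) = 2*(t:ℂ) + b - c + d := by exact_mod_cast (by omega : a = 2*t + b - c + d)
    have hmul : zω t (b - c + d + t) (c - d - t) (d + t) * δ = zω a b c d := by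
      simp only [zω, δ]
      push_cast
      linear_combination (t:ℂ) * hω4 - ω^3 * htC
    have hpk : δ ^ k = δ ^ (k-1) * δ := by rw [← pow_succ]; congr 1; omega
    rw [hrep, hpk, ← hmul, mul_div_mul_right _ _ hδne]
  -- parity of p and q
  set p : ℤ := a^2+b^2+c^2+d^2 with hp
  set q : ℤ := a*b+b*c+c*d-a*d with hq
  have key2 : ∀ w x y z : ZMod 2, w+x+y+z = 1 →
      (w*w+x*x+y*y+z*z = 1 ∧ w*x+x*y+y*z-w*z = 0) := by decide
  have hsum1 : ((a:ZMod 2)+(b:ZMod 2)+(c:ZMod 2)+(d:ZMod 2)) = 1 := by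
    have h0 : ((a+b+c+d : ℤ) : ZMod 2) ≠ 0 := by
      rw [Ne, ZMod.intCast_zmod_eq_zero_iff_dvd]
      exact_mod_cast hoddsum
    have h1 : ∀ x : ZMod 2, x ≠ 0 → x = 1 := by decide
    have := h1 _ h0
    push_cast at this
    exact this
  obtain ⟨k1, k2⟩ := key2 (a:ZMod 2) (b:ZMod 2) (c:ZMod 2) (d:ZMod 2) hsum1
  have hcastp : ((p : ℤ) : ZMod 2) = 1 := by rw [hp]; push_cast; linear_combination k1
  have hpodd : ¬ ((2:ℤ) ∣ p) := by
    intro h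
    have h0 : ((p : ℤ) : ZMod 2) = 0 := by
      rw [ZMod.intCast_zmod_eq_zero_iff_dvd]
      exact_mod_cast h
    rw [hcastp] at h0
    exact one_ne_zero h0
  have hqeven : (2:ℤ) ∣ q := by
    have h0 : ((q : ℤ) : ZMod 2) = 0 := by rw [hq]; push_cast; linear_combination k2
    rw [ZMod.intCast_zmod_eq_zero_iff_dvd] at h0
    exact_mod_cast h0
  -- norm computations
  have hnormu : ‖u‖^2 = (((p:ℝ)) + (q:ℝ) * Real.sqrt 2) / (2 + Real.sqrt 2)^k := by
    rw [hrep, norm_div, norm_pow, div_pow, ← pow_mul, mul_comm k 2, pow_mul, hnδ, normSq_zω,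
      ← hp, ← hq]
  have hnormub : ‖zωBul a b c d / (1-ω)^k‖^2
      = (((p:ℝ)) - (q:ℝ) * Real.sqrt 2) / (2 - Real.sqrt 2)^k := by
    rw [hBulz, norm_div, norm_pow, div_pow, ← pow_mul, mul_comm k 2, pow_mul, hnδ', normSq_zω,
      hp, hq]
    push_cast
    ring_nf
  -- the product identity
  obtain ⟨hA1, hA2⟩ := AB_pow k
  set A : ℤ := (AB k).1 with hA
  set B : ℤ := (AB k).2 with hB
  set N : ℤ := (A - p)^2 - 2*(B - q)^2 with hN
  have hD1 : (0:ℝ) < (2 + Real.sqrt 2)^k := pow_pos (by linarith) k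
  have hD2 : (0:ℝ) < (2 - Real.sqrt 2)^k := pow_pos (by linarith) k
  have h2kpos : (0:ℝ) < (2:ℝ)^k := by positivity
  have hdenprod : (2 + Real.sqrt 2)^k * (2 - Real.sqrt 2)^k = (2:ℝ)^k := by
    rw [← mul_pow]
    congr 1
    linear_combination -hs
  have e1 : 1 - (((p:ℝ)) + (q:ℝ) * Real.sqrt 2) / (2 + Real.sqrt 2)^k
      = ((2 + Real.sqrt 2)^k - (((p:ℝ)) + (q:ℝ) * Real.sqrt 2)) / (2 + Real.sqrt 2)^k := by
    field_simp
  have e2 : 1 - (((p:ℝ)) - (q:ℝ) * Real.sqrt 2) / (2 - Real.sqrt 2)^k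
      = ((2 - Real.sqrt 2)^k - (((p:ℝ)) - (q:ℝ) * Real.sqrt 2)) / (2 - Real.sqrt 2)^k := by
    field_simp
  have hprod : (1 - ‖u‖ ^ 2) * (1 - ‖zωBul a b c d / (1 - ω) ^ k‖ ^ 2) = (N : ℝ) / 2^k := by
    rw [hnormu, hnormub, e1, e2, div_mul_div_comm, hdenprod, hA1, hA2]
    rw [div_eq_div_iff h2kpos.ne' h2kpos.ne']
    push_cast [hN]
    linear_combination (-(((B:ℝ) - q)^2) * (2:ℝ)^k) * hs
  -- N ≡ 1 (mod 8)
  have hAeven : (2:ℤ) ∣ A := by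
    rw [hA, show k = (k-1)+1 by omega]
    exact AB1_even (k-1)
  have hBeven : (2:ℤ) ∣ B := by
    rw [hB, show k = (k-2)+2 by omega]
    exact AB2_even (k-2)
  obtain ⟨α, hα⟩ : ∃ α, A - p = 2*α + 1 := ⟨(A - p - 1)/2, by omega⟩
  obtain ⟨β, hβ⟩ : ∃ β, B - q = 2*β := ⟨(B - q)/2, by omega⟩
  obtain ⟨γ, hγ⟩ := Int.even_mul_succ_self α
  have hN8 : N % 8 = 1 := by
    have hNe : N = 8*(γ - β^2) + 1 := by rw [hN, hα, hβ]; linear_combination 4*hγ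
    omega
  -- ℓ ≤ k by minimality of ℓ
  have hkℓ : ℓ ≤ k := by
    by_contra hcon
    push_neg at hcon
    exact hℓmin k hcon ⟨N, hprod⟩
  rw [hprod] at hn
  -- integer relation n * 2^(k-ℓ) = N
  have h2ℓpos : (0:ℝ) < (2:ℝ)^ℓ := by positivity
  have hcross : (N:ℝ) * 2^ℓ = n * 2^k := (div_eq_div_iff h2kpos.ne' h2ℓpos.ne').mp hn
  have hsplit : (2:ℝ)^k = 2^ℓ * 2^(k-ℓ) := by rw [← pow_add]; congr 1; omega
  have h3 : (N:ℝ) * 2^ℓ = ((n:ℝ) * 2^(k-ℓ)) * 2^ℓ := by rw [hcross, hsplit]; ring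
  have h4 : (N:ℝ) = (n:ℝ) * 2^(k-ℓ) := mul_right_cancel₀ h2ℓpos.ne' h3
  have hInt : N = n * 2^(k-ℓ) := by exact_mod_cast h4
  rcases Nat.eq_or_lt_of_le hkℓ with heq | hlt
  · rw [← heq] at hInt
    simp at hInt
    omega
  · exfalso
    obtain ⟨m, hm⟩ : ∃ m, k - ℓ = m + 1 := ⟨k - ℓ - 1, by omega⟩
    rw [hm, pow_succ] at hInt
    have : (2:ℤ) ∣ N := ⟨n * 2^m, by rw [hInt]; ring⟩
    omega
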